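/- Let Z_1, ..., Z_{n+1} be IID random variables in a measurable space Z. Let A : Z^{n-c} × Z → Σ be a measurable function and N : Σ^{c+1} → [0,∞)^{c+1} an equivariant measurable function whose outputs always average at most 1. Define σ_i = A(Z_1,...,Z_{n-c}; Z_{n-c+i}) for i = 1,...,c and σ* = A(Z_1,...,Z_{n-c}; Z_{n+1}), and let α* be the last coordinate of N(σ_1,...,σ_c,σ*). Then E[α*] ≤ 1. -/

import Mathlib

open MeasureTheory ProbabilityTheory

lemma aux_map_pi {Ω : Type*} [MeasurableSpace Ω] (μ : Measure Ω) [IsProbabilityMeasure μ]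
    {ZZ : Type*} [mZZ : MeasurableSpace ZZ] {n : ℕ}
    (Z : Fin n → Ω → ZZ) (hZmeas : ∀ i, Measurable (Z i))
    (hindep : iIndepFun (m := fun _ => mZZ) Z μ) :
    μ.map (fun ω i => Z i ω) = Measure.pi (fun i => μ.map (Z i)) := by
  have : ∀ i, IsProbabilityMeasure (μ.map (Z i)) := fun i =>
    Measure.isProbabilityMeasure_map (hZmeas i).aemeasurable
  symm
  apply Measure.pi_eq
  intro s hs
  rw [Measure.map_apply (by exact measurable_pi_lambda _ hZmeas)
    (MeasurableSet.univ_pi hs)]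
  have : (fun ω i => Z i ω) ⁻¹' (Set.univ.pi s) = ⋂ i ∈ Finset.univ, Z i ⁻¹' s i := by
    ext ω; simp [Set.mem_pi]
  rw [this, hindep.measure_inter_preimage_eq_mul Finset.univ (fun i _ => hs i)]
  exact Finset.prod_congr rfl fun i _ => (Measure.map_apply (hZmeas i) (hs i)).symm

lemma aux_perm_pi {ZZ : Type*} [mZZ : MeasurableSpace ZZ] {n : ℕ}
    (ν : Measure ZZ) [SigmaFinite ν] (e : Equiv.Perm (Fin n)) :
    (Measure.pi (fun _ : Fin n => ν)).map (fun g i => g (e i))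
      = Measure.pi (fun _ : Fin n => ν) := by
  have h := MeasureTheory.measurePreserving_piCongrLeft
    (α := fun _ : Fin n => ZZ) (μ := fun _ : Fin n => ν) e.symm
  have : ⇑(MeasurableEquiv.piCongrLeft (fun _ : Fin n => ZZ) e.symm)
      = fun g i => g (e i) := by
    funext g i
    rw [MeasurableEquiv.coe_piCongrLeft]
    have h2 := Equiv.piCongrLeft_apply_apply (fun _ : Fin n => ZZ) e.symm g (e i)
    simpa using h2
  rw [← this]
  exact h.map_eq


/-- Validity of split conformal e-predictors: with an IID sample
`Z_1,...,Z_{t+c+1}` (training proper of size `t`, calibration set of size `c`,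
and one test observation), a split conformity measure `A` and an equivariant
normalizing transformation `N` whose nonnegative outputs average at most 1,
the e-value assigned to the test observation has expectation at most 1. -/
theorem split_conformal_e_predictor_validity
    {Ω : Type*} [MeasurableSpace Ω] (μ : Measure Ω) [IsProbabilityMeasure μ]
    {ZZ : Type*} [mZZ : MeasurableSpace ZZ] {S : Type*} [MeasurableSpace S]
    (t c : ℕ)
    (Z : Fin (t + c + 1) → Ω → ZZ) (hZmeas : ∀ i, Measurable (Z i))
    (hindep : iIndepFun (m := fun _ => mZZ) Z μ)
    (hident : ∀ i j, IdentDistrib (Z i) (Z j) μ μ)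
    (A : (Fin t → ZZ) → ZZ → S)
    (hAmeas : Measurable (fun p : (Fin t → ZZ) × ZZ => A p.1 p.2))
    (N : (Fin (c + 1) → S) → Fin (c + 1) → ℝ)
    (hNmeas : Measurable N)
    (hNequiv : ∀ (π : Equiv.Perm (Fin (c + 1))) (σ : Fin (c + 1) → S),
      N (fun i => σ (π i)) = fun i => N σ (π i))
    (hNnonneg : ∀ σ i, 0 ≤ N σ i)
    (hNavg : ∀ σ, (1 / ((c : ℝ) + 1)) * ∑ i, N σ i ≤ 1)
    -- the summaries: calibration summaries followed by the test summary
    (σ : Ω → Fin (c + 1) → S)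
    (hσ : ∀ ω, σ ω = fun i : Fin (c + 1) =>
      A (fun j : Fin t => Z ⟨j, by omega⟩ ω) (Z ⟨t + i, by omega⟩ ω)) :
    ∫ ω, N (σ ω) (Fin.last c) ∂μ ≤ 1 := by
  classical
  -- the full sample map
  set F : Ω → Fin (t + c + 1) → ZZ := fun ω i => Z i ω with hF
  have hFmeas : Measurable F := measurable_pi_lambda _ hZmeas
  set ν : Measure ZZ := μ.map (Z 0) with hν
  have hνprob : IsProbabilityMeasure ν := Measure.isProbabilityMeasure_map (hZmeas 0).aemeasurable
  have hmap : μ.map F = Measure.pi (fun _ : Fin (t + c + 1) => ν) := by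
    rw [hF, aux_map_pi μ Z hZmeas hindep]
    congr 1
    funext i
    exact (hident i 0).map_eq
  -- the summary map on the sample space
  set G : (Fin (t + c + 1) → ZZ) → Fin (c + 1) → S := fun g i =>
    A (fun j : Fin t => g ⟨j, by omega⟩) (g ⟨t + i, by omega⟩) with hG
  have hGmeas : Measurable G := by
    apply measurable_pi_lambda
    intro i
    have hm : Measurable (fun g : Fin (t + c + 1) → ZZ =>
        ((fun j : Fin t => g ⟨j, by omega⟩), g ⟨t + i, by omega⟩)) :=
      (measurable_pi_lambda _ fun j => measurable_pi_apply _).prodMk (measurable_pi_apply _)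
    exact hAmeas.comp hm
  have hσG : ∀ ω, σ ω = G (F ω) := fun ω => hσ ω
  -- exchangeability: permuting the last c+1 coordinates
  have key : ∀ π : Equiv.Perm (Fin (c + 1)),
      ∫ ω, N (σ ω) (π (Fin.last c)) ∂μ = ∫ ω, N (σ ω) (Fin.last c) ∂μ := by
    intro π
    set e : Equiv.Perm (Fin (t + c + 1)) :=
      ((finSumFinEquiv.symm.trans
        ((Equiv.sumCongr (Equiv.refl (Fin t)) π).trans finSumFinEquiv)) :
        Equiv.Perm (Fin (t + (c + 1)))) with he
    have he1 : ∀ (j : ℕ) (hj : j < t), e ⟨j, by omega⟩ = ⟨j, by omega⟩ := by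
      intro j hj
      have h1 : (⟨j, by omega⟩ : Fin (t + c + 1)) = Fin.castAdd (c + 1) ⟨j, hj⟩ := rfl
      rw [he, h1]
      show finSumFinEquiv ((Equiv.sumCongr (Equiv.refl (Fin t)) π)
        (finSumFinEquiv.symm (Fin.castAdd (c + 1) ⟨j, hj⟩))) = _
      rw [finSumFinEquiv_symm_apply_castAdd]
      rfl
    have he2 : ∀ i : Fin (c + 1), e ⟨t + i, by omega⟩ = ⟨t + π i, by omega⟩ := by
      intro i
      have h1 : (⟨t + (i : ℕ), by omega⟩ : Fin (t + c + 1)) = Fin.natAdd t i := rfl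
      rw [he, h1]
      show finSumFinEquiv ((Equiv.sumCongr (Equiv.refl (Fin t)) π)
        (finSumFinEquiv.symm (Fin.natAdd t i))) = _
      rw [finSumFinEquiv_symm_apply_natAdd]
      rfl
    have hστ : ∀ ω, (fun i => σ ω (π i)) = G (fun k => F ω (e k)) := by
      intro ω
      funext i
      rw [hσ]
      show A (fun j : Fin t => Z ⟨j, by omega⟩ ω) (Z ⟨t + π i, by omega⟩ ω)
        = A (fun j : Fin t => F ω (e ⟨j, by omega⟩)) (F ω (e ⟨t + i, by omega⟩))
      rw [he2 i]
      congr 1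
      funext j
      rw [he1 j j.isLt]
    have h1 : ∀ ω, N (σ ω) (π (Fin.last c)) = N (G (fun k => F ω (e k))) (Fin.last c) := by
      intro ω
      rw [← hστ ω, hNequiv π (σ ω)]
    simp_rw [h1]
    -- change of variables
    set h : (Fin (t + c + 1) → ZZ) → ℝ := fun g => N (G g) (Fin.last c) with hh
    have hhmeas : Measurable h := (measurable_pi_apply _).comp (hNmeas.comp hGmeas)
    have hcomp : Measurable (fun g : Fin (t + c + 1) → ZZ => fun k => g (e k)) :=
      measurable_pi_lambda _ fun k => measurable_pi_apply _
    have hφ : Measurable (fun ω => fun k => F ω (e k)) := hcomp.comp hFmeas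
    have hm1 : μ.map (fun ω => fun k => F ω (e k))
        = Measure.pi (fun _ : Fin (t + c + 1) => ν) := by
      have h2 : (fun ω => fun k => F ω (e k))
          = (fun g : Fin (t + c + 1) → ZZ => fun k => g (e k)) ∘ F := rfl
      rw [h2, ← Measure.map_map hcomp hFmeas, hmap, aux_perm_pi]
    calc ∫ ω, h (fun k => F ω (e k)) ∂μ
        = ∫ g, h g ∂(μ.map (fun ω => fun k => F ω (e k))) :=
          (integral_map hφ.aemeasurable hhmeas.aestronglyMeasurable).symm
      _ = ∫ g, h g ∂(μ.map F) := by rw [hm1, hmap]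
      _ = ∫ ω, h (F ω) ∂μ :=
          integral_map hFmeas.aemeasurable hhmeas.aestronglyMeasurable
      _ = ∫ ω, N (σ ω) (Fin.last c) ∂μ := by
          congr 1; funext ω; rw [hσG ω]
  -- integrability and bounds
  have hσmeas : Measurable σ := by
    have h2 : σ = fun ω => G (F ω) := funext hσG
    rw [h2]; exact hGmeas.comp hFmeas
  have hfmeas : ∀ i, Measurable (fun ω => N (σ ω) i) := fun i =>
    (measurable_pi_apply i).comp (hNmeas.comp hσmeas)
  have hsum_le : ∀ g, ∑ i, N g i ≤ (c : ℝ) + 1 := by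
    intro g
    have h := hNavg g
    have hpos : (0 : ℝ) < (c : ℝ) + 1 := by positivity
    rw [one_div, inv_mul_le_iff₀ hpos] at h
    simpa using h
  have hbd : ∀ i, ∀ ω, N (σ ω) i ≤ (c : ℝ) + 1 := by
    intro i ω
    refine le_trans ?_ (hsum_le (σ ω))
    exact Finset.single_le_sum (fun j _ => hNnonneg (σ ω) j) (Finset.mem_univ i)
  have hint : ∀ i, Integrable (fun ω => N (σ ω) i) μ := by
    intro i
    refine (integrable_const ((c : ℝ) + 1)).mono' (hfmeas i).aestronglyMeasurable ?_
    filter_upwards with ω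
    rw [Real.norm_eq_abs, abs_of_nonneg (hNnonneg _ _)]
    exact hbd i ω
  -- finish
  have hall : ∀ i : Fin (c + 1), ∫ ω, N (σ ω) i ∂μ = ∫ ω, N (σ ω) (Fin.last c) ∂μ := by
    intro i
    have h := key (Equiv.swap (Fin.last c) i)
    simpa using h
  have hsum : ∑ i : Fin (c + 1), ∫ ω, N (σ ω) i ∂μ ≤ (c : ℝ) + 1 := by
    rw [← integral_finset_sum _ fun i _ => hint i]
    calc ∫ ω, ∑ i, N (σ ω) i ∂μ ≤ ∫ _, (c : ℝ) + 1 ∂μ :=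
          integral_mono (integrable_finset_sum _ fun i _ => hint i)
            (integrable_const _) fun ω => hsum_le (σ ω)
      _ = (c : ℝ) + 1 := by simp
  rw [Finset.sum_congr rfl fun i _ => hall i, Finset.sum_const] at hsum
  simp only [Finset.card_univ, Fintype.card_fin, nsmul_eq_mul] at hsum
  have hpos : (0 : ℝ) < (c : ℝ) + 1 := by positivity
  have hfin : ((c : ℝ) + 1) * ∫ ω, N (σ ω) (Fin.last c) ∂μ ≤ ((c : ℝ) + 1) * 1 := by
    push_cast at hsum ⊢
    linarith
  exact le_of_mul_le_mul_left hfin hpos
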